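/- The square of the Sierpinski (Pascal mod 2) matrix has entries: letting Z(n,m) = 1 iff every binary digit of n is ≥ the corresponding digit of m (else 0), the (n,m) entry of the matrix product Σ_k Z(n,k)·Z(k,m) equals Z(n,m) · 2^{s(n-m)} when Z(n,m) = 1, where s(r) is the binary digit sum of r; i.e., Σ_{k} Z(n,k)·Z(k,m) = Z(n,m)·2^{s_2(n ⊖ m)} where n ⊖ m has digits n_i - m_i. Equivalently: for n with binary digits n_i, Σ_{m=0}^n (Σ_k Z(n,k)Z(k,m))·x^m = ∏_{i=0}^∞ (2 + x^{2^i})^{n_i}. -/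

import Mathlib

open Classical in
/-- Pascal triangle mod 2 (Sierpinski matrix): `Z(n,m) = 1` iff every binary digit of `n`
is ≥ the corresponding binary digit of `m`. -/
noncomputable def Z (n m : ℕ) : ℕ :=
  if ∀ i : ℕ, m / 2 ^ i % 2 ≤ n / 2 ^ i % 2 then 1 else 0

lemma le_of_digits_le (m : ℕ) : ∀ n, (∀ i, m / 2 ^ i % 2 ≤ n / 2 ^ i % 2) → m ≤ n := by
  induction m using Nat.strong_induction_on with
  | _ m ih =>
    intro n h
    rcases Nat.eq_zero_or_pos m with rfl | hm
    · exact Nat.zero_le n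
    have h0 := h 0
    simp only [pow_zero, Nat.div_one] at h0
    have h2 : ∀ i, (m / 2) / 2 ^ i % 2 ≤ (n / 2) / 2 ^ i % 2 := by
      intro i
      have := h (i + 1)
      rw [pow_succ'] at this
      rwa [Nat.div_div_eq_div_mul, Nat.div_div_eq_div_mul]
    have := ih (m / 2) (Nat.div_lt_self hm (by norm_num)) (n / 2) h2
    omega

lemma Z_eq_zero_of_lt {n m : ℕ} (h : n < m) : Z n m = 0 := by
  rw [Z, if_neg]
  intro hc
  exact absurd (le_of_digits_le m n hc) (by omega)

lemma digit_low {N a r i : ℕ} (hiN : i < N) :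
    (a + 2 ^ N * r) / 2 ^ i % 2 = a / 2 ^ i % 2 := by
  obtain ⟨j, rfl⟩ : ∃ j, N = i + 1 + j := ⟨N - i - 1, by omega⟩
  rw [show 2 ^ (i + 1 + j) * r = 2 ^ i * (2 * (2 ^ j * r)) by ring,
    Nat.add_mul_div_left _ _ (Nat.two_pow_pos i)]
  omega

lemma digit_mid {N a r : ℕ} (ha : a < 2 ^ N) :
    (a + 2 ^ N * r) / 2 ^ N % 2 = r % 2 := by
  rw [Nat.add_mul_div_left _ _ (Nat.two_pow_pos N),
    Nat.div_eq_of_lt ha]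
  omega

lemma digit_high {N a r i : ℕ} (ha : a < 2 ^ N) (hr : r < 2) (hi : N < i) :
    (a + 2 ^ N * r) / 2 ^ i = 0 := by
  apply Nat.div_eq_of_lt
  have h1 : a + 2 ^ N * r < 2 ^ (N + 1) := by
    have h2 : 2 ^ N * r ≤ 2 ^ N * 1 := Nat.mul_le_mul_left _ (by omega)
    have : 2 ^ (N + 1) = 2 ^ N + 2 ^ N * 1 := by ring
    omega
  calc a + 2 ^ N * r < 2 ^ (N + 1) := h1
    _ ≤ 2 ^ i := Nat.pow_le_pow_right (by norm_num) (by omega)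

lemma Z_split {N a b r s : ℕ} (ha : a < 2 ^ N) (hb : b < 2 ^ N) (hr : r < 2) (hs : s < 2) :
    Z (a + 2 ^ N * r) (b + 2 ^ N * s) = Z a b * Z r s := by
  have key : (∀ i, (b + 2 ^ N * s) / 2 ^ i % 2 ≤ (a + 2 ^ N * r) / 2 ^ i % 2) ↔
      ((∀ i, b / 2 ^ i % 2 ≤ a / 2 ^ i % 2) ∧ (∀ i, s / 2 ^ i % 2 ≤ r / 2 ^ i % 2)) := by
    constructor
    · intro h
      constructor
      · intro i
        rcases lt_or_ge i N with hi | hi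
        · have := h i; rwa [digit_low hi, digit_low hi] at this
        · have hb0 : b / 2 ^ i = 0 :=
            Nat.div_eq_of_lt (lt_of_lt_of_le hb (Nat.pow_le_pow_right (by norm_num) hi))
          simp [hb0]
      · intro i
        rcases Nat.eq_zero_or_pos i with rfl | hi
        · have := h N
          rw [digit_mid ha, digit_mid hb] at this
          simpa using this
        · have h2i : 2 ≤ 2 ^ i := by
            calc (2:ℕ) = 2 ^ 1 := by norm_num
              _ ≤ 2 ^ i := Nat.pow_le_pow_right (by norm_num) hi
          have hs0 : s / 2 ^ i = 0 := Nat.div_eq_of_lt (lt_of_lt_of_le hs h2i)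
          simp [hs0]
    · rintro ⟨h1, h2⟩ i
      rcases lt_trichotomy i N with hi | rfl | hi
      · rw [digit_low hi, digit_low hi]; exact h1 i
      · rw [digit_mid ha, digit_mid hb]
        have := h2 0
        simpa using this
      · rw [digit_high hb hs hi]
        simp
  rw [Z, Z, Z, key]
  by_cases h1 : ∀ i, b / 2 ^ i % 2 ≤ a / 2 ^ i % 2 <;>
    by_cases h2 : ∀ i, s / 2 ^ i % 2 ≤ r / 2 ^ i % 2 <;>
    simp [h1, h2]

lemma Z_zero_right (n : ℕ) : Z n 0 = 1 := by
  rw [Z, if_pos]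
  intro i
  simp [Nat.zero_div]

lemma Z_zero_one : Z 0 1 = 0 := by
  rw [Z, if_neg]
  intro h
  have := h 0
  norm_num at this

lemma Z_one_one : Z 1 1 = 1 := by
  rw [Z, if_pos]
  intro i
  exact le_refl _

open Polynomial in
lemma main_lemma : ∀ N n, n < 2 ^ N →
    ∑ m ∈ Finset.range (2 ^ N),
        Polynomial.C ((∑ k ∈ Finset.range (2 ^ N), Z n k * Z k m : ℕ) : ℤ) * X ^ m =
      ∏ i ∈ Finset.range N, (2 + X ^ 2 ^ i) ^ (n / 2 ^ i % 2) := by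
  intro N
  induction N with
  | zero =>
    intro n hn
    interval_cases n
    simp [Z_zero_right]
  | succ N ih =>
    intro n hn
    obtain ⟨a, r, ha, hr, rfl⟩ : ∃ a r, a < 2 ^ N ∧ r < 2 ∧ n = a + 2 ^ N * r := by
      refine ⟨n % 2 ^ N, n / 2 ^ N, Nat.mod_lt _ (Nat.two_pow_pos N), ?_, ?_⟩
      · rw [Nat.div_lt_iff_lt_mul (Nat.two_pow_pos N)]
        calc n < 2 ^ (N + 1) := hn
          _ = 2 * 2 ^ N := by ring
      · exact (Nat.mod_add_div n (2 ^ N)).symm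
    -- split inner k-sum
    have c_split : ∀ b s, b < 2 ^ N → s < 2 →
        (∑ k ∈ Finset.range (2 ^ (N + 1)), Z (a + 2 ^ N * r) k * Z k (b + 2 ^ N * s)) =
        (∑ k ∈ Finset.range (2 ^ N), Z a k * Z k b) * (Z r 0 * Z 0 s + Z r 1 * Z 1 s) := by
      intro b s hb hs
      rw [show 2 ^ (N + 1) = 2 ^ N + 2 ^ N by ring, Finset.sum_range_add]
      have e0 : ∀ k ∈ Finset.range (2 ^ N),
          Z (a + 2 ^ N * r) k * Z k (b + 2 ^ N * s) = Z a k * Z k b * (Z r 0 * Z 0 s) := by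
        intro k hk
        have hk' := Finset.mem_range.mp hk
        have h1 : Z (a + 2 ^ N * r) k = Z a k * Z r 0 := by
          have := Z_split (N := N) ha hk' hr (show 0 < 2 by norm_num)
          simpa using this
        have h2 : Z k (b + 2 ^ N * s) = Z k b * Z 0 s := by
          have := Z_split (N := N) hk' hb (show 0 < 2 by norm_num) hs
          simpa using this
        rw [h1, h2]; ring
      have e1 : ∀ k ∈ Finset.range (2 ^ N),
          Z (a + 2 ^ N * r) (2 ^ N + k) * Z (2 ^ N + k) (b + 2 ^ N * s) =
            Z a k * Z k b * (Z r 1 * Z 1 s) := by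
        intro k hk
        have hk' := Finset.mem_range.mp hk
        have h1 : Z (a + 2 ^ N * r) (2 ^ N + k) = Z a k * Z r 1 := by
          have := Z_split (N := N) ha hk' hr (show 1 < 2 by norm_num)
          rw [show 2 ^ N + k = k + 2 ^ N * 1 by ring]
          simpa using this
        have h2 : Z (2 ^ N + k) (b + 2 ^ N * s) = Z k b * Z 1 s := by
          have := Z_split (N := N) hk' hb (show 1 < 2 by norm_num) hs
          rw [show 2 ^ N + k = k + 2 ^ N * 1 by ring]
          simpa using this
        rw [h1, h2]; ring
      rw [Finset.sum_congr rfl e0, Finset.sum_congr rfl e1, ← Finset.sum_mul,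
        ← Finset.sum_mul, ← mul_add]
    -- split outer m-sum
    rw [show 2 ^ (N + 1) = 2 ^ N + 2 ^ N by ring] at hn ⊢
    rw [Finset.sum_range_add]
    have h2N : (2:ℕ) ^ N + 2 ^ N = 2 ^ (N + 1) := by ring
    have half0 : ∀ b ∈ Finset.range (2 ^ N),
        Polynomial.C ((∑ k ∈ Finset.range (2 ^ N + 2 ^ N), Z (a + 2 ^ N * r) k * Z k b : ℕ) : ℤ)
            * X ^ b =
          Polynomial.C ((Z r 0 * Z 0 0 + Z r 1 * Z 1 0 : ℕ) : ℤ) *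
            (Polynomial.C ((∑ k ∈ Finset.range (2 ^ N), Z a k * Z k b : ℕ) : ℤ) * X ^ b) := by
      intro b hb
      have hb' := Finset.mem_range.mp hb
      have := c_split b 0 hb' (by norm_num)
      simp only [mul_zero, add_zero] at this
      rw [h2N, this, Nat.cast_mul, map_mul]
      ring
    have half1 : ∀ b ∈ Finset.range (2 ^ N),
        Polynomial.C ((∑ k ∈ Finset.range (2 ^ N + 2 ^ N),
              Z (a + 2 ^ N * r) k * Z k (2 ^ N + b) : ℕ) : ℤ) * X ^ (2 ^ N + b) =
          Polynomial.C ((Z r 0 * Z 0 1 + Z r 1 * Z 1 1 : ℕ) : ℤ) * X ^ 2 ^ N *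
            (Polynomial.C ((∑ k ∈ Finset.range (2 ^ N), Z a k * Z k b : ℕ) : ℤ) * X ^ b) := by
      intro b hb
      have hb' := Finset.mem_range.mp hb
      have := c_split b 1 hb' (by norm_num)
      rw [h2N, show 2 ^ N + b = b + 2 ^ N * 1 by ring, this, Nat.cast_mul, map_mul,
        show b + 2 ^ N * 1 = b + 2 ^ N by ring, pow_add]
      ring
    rw [Finset.sum_congr rfl half0, Finset.sum_congr rfl half1, ← Finset.mul_sum,
      ← Finset.mul_sum, ih a ha]
    -- now the RHS product
    rw [Finset.prod_range_succ]
    have hdig : ∀ i ∈ Finset.range N,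
        (2 + X ^ 2 ^ i : ℤ[X]) ^ ((a + 2 ^ N * r) / 2 ^ i % 2) =
          (2 + X ^ 2 ^ i) ^ (a / 2 ^ i % 2) := by
      intro i hi
      rw [digit_low (Finset.mem_range.mp hi)]
    rw [Finset.prod_congr rfl hdig, digit_mid ha, Nat.mod_eq_of_lt hr]
    interval_cases r <;>
      simp [Z_zero_right, Z_zero_one, Z_one_one] <;> ring

open Polynomial in
theorem stmt14 (n N : ℕ) (hN : n < 2 ^ N) :
    ∑ m ∈ Finset.range (n + 1),
        Polynomial.C ((∑ k ∈ Finset.range (n + 1), Z n k * Z k m : ℕ) : ℤ) * X ^ m =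
      ∏ i ∈ Finset.range N, (2 + X ^ 2 ^ i) ^ (n / 2 ^ i % 2) := by
  rw [← main_lemma N n hN]
  have hsub : Finset.range (n + 1) ⊆ Finset.range (2 ^ N) :=
    Finset.range_subset_range.mpr (by omega)
  have hk : ∀ m, (∑ k ∈ Finset.range (2 ^ N), Z n k * Z k m) =
      ∑ k ∈ Finset.range (n + 1), Z n k * Z k m := by
    intro m
    symm
    apply Finset.sum_subset hsub
    intro k hk1 hk2
    have : n < k := by
      simp only [Finset.mem_range] at hk2
      omega
    rw [Z_eq_zero_of_lt this, zero_mul]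
  simp_rw [hk]
  apply Finset.sum_subset hsub
  intro m hm1 hm2
  have hnm : n < m := by
    simp only [Finset.mem_range] at hm2
    omega
  have hz : (∑ k ∈ Finset.range (n + 1), Z n k * Z k m) = 0 := by
    apply Finset.sum_eq_zero
    intro k hk1
    have : k < m := by
      have := Finset.mem_range.mp hk1
      omega
    rw [Z_eq_zero_of_lt this, mul_zero]
  rw [hz]
  simp
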